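/- arXiv:1311.1931 — 4 statements merged into one kernel-verified Lean document; each statement's English description precedes it below -/
import Mathlib

section
/- Let q be a positive integer and let ν₁,…,ν_q be positive integers (each ≥ 2) satisfying: (A) for every proper subset I of {1,…,q}, ∑_{j∈I}(1 - 1/ν_j) ≤ m+2, and (B) there is no tuple of positive integers (ν*₁,…,ν*_q) distinct from (ν₁,…,ν_q) with ν*_j ≤ ν_j for all j and ∑_{j=1}^q (1 - 1/ν*_j) > m+2, and ∑_{j=1}^q (1 - 1/ν_j) > m+2. If the ν_j are ordered increasingly, then γ - (m+2) ≤ 1/(ν_q(ν_q - 1)), where γ = ∑_{j=1}^q (1 - 1/ν_j). -/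
open Finset

/-- under the minimality conditions (A) and (B) on a nondecreasing tuple of
ramification indices `ν j ≥ 2` with `γ = ∑ (1 - 1/ν j) > m + 2`, one has
`γ - (m+2) ≤ 1/(ν_q (ν_q - 1))`. -/
theorem gamma_sub_le_inv_last_mul_pred
    (m : ℕ) (hm : 0 < m) (n : ℕ) (ν : Fin (n + 1) → ℕ)
    (h2 : ∀ j, 2 ≤ ν j) (hmono : Monotone ν)
    (hA : ∀ I : Finset (Fin (n + 1)), I ≠ Finset.univ →
      ∑ j ∈ I, (1 - 1 / (ν j : ℝ)) ≤ (m : ℝ) + 2)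
    (hB : ¬ ∃ ν' : Fin (n + 1) → ℕ, ν' ≠ ν ∧ (∀ j, 0 < ν' j ∧ ν' j ≤ ν j) ∧
      (m : ℝ) + 2 < ∑ j, (1 - 1 / (ν' j : ℝ)))
    (hγ : (m : ℝ) + 2 < ∑ j, (1 - 1 / (ν j : ℝ))) :
    (∑ j, (1 - 1 / (ν j : ℝ))) - ((m : ℝ) + 2) ≤
      1 / ((ν (Fin.last n) : ℝ) * ((ν (Fin.last n) : ℝ) - 1)) := by
  set q := Fin.last n with hq
  set a := ν q with ha
  have ha2 : 2 ≤ a := h2 q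
  set ν' : Fin (n + 1) → ℕ := Function.update ν q (a - 1) with hν'
  have hne : ν' ≠ ν := by
    intro h
    have := congrFun h q
    rw [hν', Function.update_self] at this
    omega
  have hle : ∀ j, 0 < ν' j ∧ ν' j ≤ ν j := by
    intro j
    by_cases hj : j = q
    · subst hj; rw [hν', Function.update_self]; omega
    · rw [hν', Function.update_of_ne hj]
      have := h2 j; omega
  have hsum : ∑ j, (1 - 1 / (ν' j : ℝ)) ≤ (m : ℝ) + 2 := by
    by_contra h
    exact hB ⟨ν', hne, hle, lt_of_not_ge h⟩
  have hdiff : (∑ j, (1 - 1 / (ν j : ℝ))) - ∑ j, (1 - 1 / (ν' j : ℝ)) =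
      1 / ((a : ℝ) * ((a : ℝ) - 1)) := by
    rw [← Finset.sum_sub_distrib]
    rw [Finset.sum_eq_single q]
    · rw [hν', Function.update_self]
      have h1 : ((a - 1 : ℕ) : ℝ) = (a : ℝ) - 1 := by
        push_cast [Nat.cast_sub (by omega : 1 ≤ a)]; ring
      rw [h1, ← ha]
      have hx : (2 : ℝ) ≤ (a : ℝ) := by exact_mod_cast ha2
      have h0 : (a : ℝ) ≠ 0 := by linarith
      have h0' : (a : ℝ) - 1 ≠ 0 := by linarith
      field_simp
      ring
    · intro b _ hb
      rw [hν', Function.update_of_ne hb]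
      ring
    · intro h; exact absurd (Finset.mem_univ q) h
  linarith
end

section
/- Fix a positive integer m. There exist only finitely many tuples (q, ν₁,…,ν_q) of integers with each ν_j ≥ 2, ν₁ ≤ … ≤ ν_q, such that ∑_{j=1}^q (1 - 1/ν_j) > m+2, and which satisfy: (A) for every proper subset I of {1,…,q}, ∑_{j∈I}(1 - 1/ν_j) ≤ m+2, and (B) no tuple (ν*₁,…,ν*_q) ≠ (ν₁,…,ν_q) of positive integers with ν*_j ≤ ν_j for all j satisfies ∑(1 - 1/ν*_j) > m+2. -/
open Finset

/-- For fixed `q`, the set of tuples satisfying the conditions is finite, because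
condition (B) makes it an antichain in `Fin q → ℕ`, which is a wqo by Dickson's lemma. -/
lemma fiber_finite (m q : ℕ) :
    Set.Finite {f : Fin q → ℕ |
      (∀ j, 2 ≤ f j) ∧ Monotone f ∧
      ((m : ℝ) + 2 < ∑ j, (1 - 1 / (f j : ℝ))) ∧
      (∀ I : Finset (Fin q), I ≠ Finset.univ →
        ∑ j ∈ I, (1 - 1 / (f j : ℝ)) ≤ (m : ℝ) + 2) ∧
      ¬ ∃ ν' : Fin q → ℕ, ν' ≠ f ∧ (∀ j, 0 < ν' j ∧ ν' j ≤ f j) ∧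
        (m : ℝ) + 2 < ∑ j, (1 - 1 / (ν' j : ℝ))} := by
  have hpwo : Set.IsPWO {f : Fin q → ℕ |
      (∀ j, 2 ≤ f j) ∧ Monotone f ∧
      ((m : ℝ) + 2 < ∑ j, (1 - 1 / (f j : ℝ))) ∧
      (∀ I : Finset (Fin q), I ≠ Finset.univ →
        ∑ j ∈ I, (1 - 1 / (f j : ℝ)) ≤ (m : ℝ) + 2) ∧
      ¬ ∃ ν' : Fin q → ℕ, ν' ≠ f ∧ (∀ j, 0 < ν' j ∧ ν' j ≤ f j) ∧
        (m : ℝ) + 2 < ∑ j, (1 - 1 / (ν' j : ℝ))} := by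
    have hwo : ∀ i : Fin q, IsWellOrder ℕ (· < ·) := fun _ => inferInstance
    exact Set.isPWO_of_wellQuasiOrderedLE _
  refine IsAntichain.finite_of_partiallyWellOrderedOn ?_ hpwo
  intro f hf g hg hne hle
  obtain ⟨hf2, -, hfsum, -, -⟩ := hf
  obtain ⟨-, -, -, -, hB⟩ := hg
  exact hB ⟨f, hne, fun j => ⟨lt_of_lt_of_le (by norm_num) (hf2 j), hle j⟩, hfsum⟩

/-- Lemma 3: for fixed `m`, there are only finitely many tuples
`(q, ν₁ ≤ … ≤ ν_q)` of integers `ν_j ≥ 2` with `∑ (1 - 1/ν_j) > m + 2` satisfying the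
minimality conditions (A) and (B). -/
theorem finitely_many_minimal_ramification_tuples (m : ℕ) (hm : 0 < m) :
    Set.Finite {p : Σ q : ℕ, Fin q → ℕ |
      (∀ j, 2 ≤ p.2 j) ∧ Monotone p.2 ∧
      ((m : ℝ) + 2 < ∑ j, (1 - 1 / (p.2 j : ℝ))) ∧
      (∀ I : Finset (Fin p.1), I ≠ Finset.univ →
        ∑ j ∈ I, (1 - 1 / (p.2 j : ℝ)) ≤ (m : ℝ) + 2) ∧
      ¬ ∃ ν' : Fin p.1 → ℕ, ν' ≠ p.2 ∧ (∀ j, 0 < ν' j ∧ ν' j ≤ p.2 j) ∧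
        (m : ℝ) + 2 < ∑ j, (1 - 1 / (ν' j : ℝ))} := by
  have hfin : ∀ q : ℕ, Set.Finite (Sigma.mk (β := fun q => Fin q → ℕ) q ''
      {f : Fin q → ℕ |
        (∀ j, 2 ≤ f j) ∧ Monotone f ∧
        ((m : ℝ) + 2 < ∑ j, (1 - 1 / (f j : ℝ))) ∧
        (∀ I : Finset (Fin q), I ≠ Finset.univ →
          ∑ j ∈ I, (1 - 1 / (f j : ℝ)) ≤ (m : ℝ) + 2) ∧
        ¬ ∃ ν' : Fin q → ℕ, ν' ≠ f ∧ (∀ j, 0 < ν' j ∧ ν' j ≤ f j) ∧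
          (m : ℝ) + 2 < ∑ j, (1 - 1 / (ν' j : ℝ))}) := by
    intro q
    exact (fiber_finite m q).image (Sigma.mk (β := fun q => Fin q → ℕ) q)
  refine Set.Finite.subset (Set.Finite.biUnion (Set.finite_Iic (2 * m + 5))
    (fun q _ => hfin q)) ?_
  rintro ⟨q, f⟩ hp
  obtain ⟨h2, hmono, hsum, hA, hB⟩ := hp
  -- bound on q
  have hq : q ≤ 2 * m + 5 := by
    rcases Nat.eq_zero_or_pos q with rfl | hq0
    · omega
    · set j0 : Fin q := ⟨0, hq0⟩
      have hne : (Finset.univ.erase j0 : Finset (Fin q)) ≠ Finset.univ := by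
        intro h
        have := Finset.mem_univ j0
        rw [← h] at this
        exact (Finset.notMem_erase j0 _) this
      have hle := hA (Finset.univ.erase j0) hne
      have hlow : ((Finset.univ.erase j0).card : ℝ) * (1 / 2) ≤
          ∑ j ∈ Finset.univ.erase j0, (1 - 1 / ((f j : ℕ) : ℝ)) := by
        have hterm : ∀ j ∈ Finset.univ.erase j0, (1 / 2 : ℝ) ≤ 1 - 1 / ((f j : ℕ) : ℝ) := by
          intro j _
          have h2j : (2 : ℝ) ≤ (f j : ℝ) := by exact_mod_cast h2 j
          have : 1 / ((f j : ℕ) : ℝ) ≤ 1 / 2 := by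
            apply one_div_le_one_div_of_le <;> linarith
          linarith
        calc ((Finset.univ.erase j0).card : ℝ) * (1 / 2)
            = ∑ _j ∈ Finset.univ.erase j0, (1 / 2 : ℝ) := by
              rw [Finset.sum_const, nsmul_eq_mul]
          _ ≤ _ := Finset.sum_le_sum hterm
      have hcard : (Finset.univ.erase j0).card = q - 1 := by
        rw [Finset.card_erase_of_mem (Finset.mem_univ j0), Finset.card_univ, Fintype.card_fin]
      rw [hcard] at hlow
      have : ((q - 1 : ℕ) : ℝ) * (1 / 2) ≤ (m : ℝ) + 2 := le_trans hlow hle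
      have hq1 : ((q - 1 : ℕ) : ℝ) ≤ 2 * (m : ℝ) + 4 := by linarith
      have : (q - 1 : ℕ) ≤ 2 * m + 4 := by exact_mod_cast hq1
      omega
  exact Set.mem_biUnion hq ⟨f, ⟨h2, hmono, hsum, hA, hB⟩, rfl⟩
end

section
/- Let m ≥ 2 be an even integer, let α₁,…,α_{m/2} ∈ ℂ∖{0,±1} be distinct with α_i ≠ 1/α_j for all i,j, let Σ = ℂ∖({0} ∪ {α_i} ∪ {1/α_i}), and let ω = dz/(z·∏_{i=1}^{m/2}(z−α_i)(α_i z−1)), g(z) = z. Then the conformal metric ds² = (1+|g|²)^m |ω|² on Σ is complete. -/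
open Set

/-- A curve `c : [0,∞) → ℂ` is a divergent curve in the open set `U`: it stays in `U`,
is continuous, and eventually leaves every compact subset of `U`. -/
def IsDivergentCurve (U : Set ℂ) (c : ℝ → ℂ) : Prop :=
  (∀ t, 0 ≤ t → c t ∈ U) ∧ ContinuousOn c (Set.Ici 0) ∧
  ∀ K : Set ℂ, K ⊆ U → IsCompact K → ∃ T : ℝ, ∀ t, T ≤ t → c t ∉ K

/-- The length of a curve with respect to the conformal density `lam`. -/
noncomputable def curveLength (lam : ℂ → ℝ) (c : ℝ → ℂ) : ENNReal :=
  ∫⁻ t in Set.Ici (0 : ℝ), ENNReal.ofReal (lam (c t) * ‖deriv c t‖)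

/-- A conformal metric `lam(z)²|dz|²` on `U` is complete if every differentiable divergent
curve in `U` has infinite length. -/
def IsCompleteConformalMetric (U : Set ℂ) (lam : ℂ → ℝ) : Prop :=
  ∀ c : ℝ → ℂ, IsDivergentCurve U c → (∀ t, 0 ≤ t → DifferentiableAt ℝ c t) →
    curveLength lam c = ⊤

section helpers
open Polynomial MeasureTheory


lemma pow_le_one_add_sq {x : ℝ} (hx : 0 ≤ x) {k n : ℕ} (h : k ≤ 2 * n) :
    x ^ k ≤ (1 + x ^ 2) ^ n := by
  rcases le_total x 1 with hx1 | hx1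
  · calc x ^ k ≤ 1 := pow_le_one₀ hx hx1
    _ ≤ (1 + x ^ 2) ^ n := one_le_pow₀ (by nlinarith)
  · calc x ^ k ≤ x ^ (2 * n) := pow_le_pow_right₀ hx1 h
    _ = (x ^ 2) ^ n := by rw [pow_mul]
    _ ≤ (1 + x ^ 2) ^ n := pow_le_pow_left₀ (by positivity) (by nlinarith) n

lemma half_inv_sq_mul {y w : ℝ} (hy : 0 < y) : (1/2) * ((y^2)⁻¹ * (2 * y * w)) = w / y := by
  field_simp

lemma a_inv_mul {a s x : ℝ} (hs : s ≠ 0) : a * (s⁻¹ * (2 * x)) = (2 * a * x) / s := by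
  field_simp

lemma poly_eval_bound (p : Polynomial ℂ) (n : ℕ) (hd : p.natDegree ≤ 2 * n) (z : ℂ) :
    ‖p.eval z‖ ≤ (∑ k ∈ Finset.range (p.natDegree + 1), ‖p.coeff k‖) * (1 + ‖z‖ ^ 2) ^ n := by
  rw [Polynomial.eval_eq_sum_range]
  calc ‖∑ k ∈ Finset.range (p.natDegree + 1), p.coeff k * z ^ k‖
      ≤ ∑ k ∈ Finset.range (p.natDegree + 1), ‖p.coeff k * z ^ k‖ := norm_sum_le _ _
    _ ≤ ∑ k ∈ Finset.range (p.natDegree + 1), ‖p.coeff k‖ * (1 + ‖z‖ ^ 2) ^ n := by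
        refine Finset.sum_le_sum fun k hk => ?_
        rw [norm_mul, norm_pow]
        refine mul_le_mul_of_nonneg_left ?_ (norm_nonneg _)
        exact pow_le_one_add_sq (norm_nonneg z)
          (le_trans (Nat.lt_succ_iff.mp (Finset.mem_range.mp hk)) hd)
    _ = _ := (Finset.sum_mul _ _ _).symm

section main

variable (m : ℕ) (α : Fin (m / 2) → ℂ)

noncomputable def Fpoly : Polynomial ℂ :=
  X * ∏ i, ((X - C (α i)) * (C (α i) * X - 1))

lemma Fpoly_eval (z : ℂ) :
    (Fpoly m α).eval z = z * ∏ i, ((z - α i) * (α i * z - 1)) := by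
  simp only [Fpoly, eval_mul, eval_X, eval_prod, eval_sub, eval_C, eval_one]

lemma Fpoly_natDegree : (Fpoly m α).natDegree ≤ m + 1 := by
  refine le_trans (natDegree_mul_le) ?_
  have h1 : (X : Polynomial ℂ).natDegree = 1 := natDegree_X
  have h2 : (∏ i, ((X - C (α i)) * (C (α i) * X - 1))).natDegree ≤ m := by
    refine le_trans (natDegree_prod_le _ _) ?_
    have : ∀ i : Fin (m/2), ((X - C (α i)) * (C (α i) * X - 1)).natDegree ≤ 2 := by
      intro i
      refine le_trans natDegree_mul_le ?_
      have a1 : (X - C (α i)).natDegree ≤ 1 := natDegree_X_sub_C_le _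
      have a2 : (C (α i) * X - 1).natDegree ≤ 1 := by
        refine le_trans (natDegree_sub_le _ _) ?_
        simp only [natDegree_one, max_le_iff]
        exact ⟨le_trans (natDegree_C_mul_le _ _) (le_of_eq natDegree_X), by simp⟩
      omega
    refine le_trans (Finset.sum_le_sum fun i _ => this i) ?_
    simp only [Finset.sum_const, Finset.card_univ, Fintype.card_fin, smul_eq_mul]
    omega
  omega

end main

set_option maxHeartbeats 3000000 in
theorem example_metric_complete'
    (m : ℕ) (hm : Even m) (hm2 : 2 ≤ m)
    (α : Fin (m / 2) → ℂ)
    (h0 : ∀ i, α i ≠ 0 ∧ α i ≠ 1 ∧ α i ≠ -1) :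
    ∀ c : ℝ → ℂ,
    ((∀ t, 0 ≤ t → c t ∈ {z : ℂ | z ≠ 0 ∧ ∀ i, z ≠ α i ∧ z ≠ (α i)⁻¹}) ∧ ContinuousOn c (Set.Ici 0) ∧
      ∀ K : Set ℂ, K ⊆ {z : ℂ | z ≠ 0 ∧ ∀ i, z ≠ α i ∧ z ≠ (α i)⁻¹} → IsCompact K → ∃ T : ℝ, ∀ t, T ≤ t → c t ∉ K) →
    (∀ t, 0 ≤ t → DifferentiableAt ℝ c t) →
    (∫⁻ t in Set.Ici (0 : ℝ), ENNReal.ofReal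
      ((fun z => (1 + ‖z‖ ^ 2) ^ (m / 2) *
        ‖(z * ∏ i, ((z - α i) * (α i * z - 1)))⁻¹‖) (c t) * ‖deriv c t‖)) = ⊤ := by
  intro c hdc hdiff
  obtain ⟨hmem, hcont, hdiv⟩ := hdc
  set U : Set ℂ := {z : ℂ | z ≠ 0 ∧ ∀ i, z ≠ α i ∧ z ≠ (α i)⁻¹} with hUdef
  set F : ℂ → ℂ := fun z => z * ∏ i, ((z - α i) * (α i * z - 1)) with hFdef
  set P : Polynomial ℂ := Fpoly m α with hPdef
  have hPF : ∀ z, P.eval z = F z := fun z => Fpoly_eval m α z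
  have hm2' : 2 * (m / 2) = m := Nat.mul_div_cancel' hm.two_dvd
  set lam : ℂ → ℝ := fun z => (1 + ‖z‖ ^ 2) ^ (m / 2) * ‖(F z)⁻¹‖ with hlamdef
  have hFne : ∀ z ∈ U, F z ≠ 0 := by
    intro z hz
    obtain ⟨hz0, hzi⟩ := hz
    refine mul_ne_zero hz0 (Finset.prod_ne_zero_iff.mpr fun i _ => mul_ne_zero ?_ ?_)
    · exact sub_ne_zero.mpr (hzi i).1
    · intro hcon
      have h1 : α i * z = 1 := by linear_combination hcon
      exact (hzi i).2 (eq_inv_of_mul_eq_one_right (by linear_combination h1))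
  have hF0 : ∀ z, z ∉ U → F z = 0 := by
    intro z hz
    simp only [hUdef, mem_setOf_eq, not_and_or, not_forall, not_not] at hz
    rcases hz with hz | ⟨i, hi⟩
    · simp [hFdef, hz]
    · have : z = α i ∨ z = (α i)⁻¹ := by tauto
      rcases this with h | h
      · have : (z - α i) * (α i * z - 1) = 0 := by rw [h]; ring
        simp only [hFdef]
        rw [Finset.prod_eq_zero (Finset.mem_univ i) this, mul_zero]
      · have : (z - α i) * (α i * z - 1) = 0 := by
          rw [h, mul_inv_cancel₀ (h0 i).1]; ring
        simp only [hFdef]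
        rw [Finset.prod_eq_zero (Finset.mem_univ i) this, mul_zero]
  -- polynomial bound constants
  set C1 : ℝ := ∑ k ∈ Finset.range (P.derivative.natDegree + 1), ‖P.derivative.coeff k‖ with hC1def
  have hC1 : ∀ z, ‖P.derivative.eval z‖ ≤ C1 * (1 + ‖z‖ ^ 2) ^ (m / 2) := by
    intro z
    refine poly_eval_bound _ _ ?_ z
    have h1 := Polynomial.natDegree_derivative_le P
    have h2 := Fpoly_natDegree m α
    rw [← hPdef] at h2
    omega
  set Q2 : Polynomial ℂ := X * P with hQ2def
  set C2 : ℝ := ∑ k ∈ Finset.range (Q2.natDegree + 1), ‖Q2.coeff k‖ with hC2def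
  have hC2 : ∀ z, ‖z‖ * ‖F z‖ ≤ C2 * (1 + ‖z‖ ^ 2) ^ (m / 2 + 1) := by
    intro z
    have h1 : ‖Q2.eval z‖ = ‖z‖ * ‖F z‖ := by
      rw [hQ2def, eval_mul, eval_X, hPF]; exact norm_mul z (F z)
    rw [← h1]
    refine poly_eval_bound _ _ ?_ z
    have h2 : Q2.natDegree ≤ (X : Polynomial ℂ).natDegree + P.natDegree :=
      Polynomial.natDegree_mul_le
    have h3 := Fpoly_natDegree m α
    rw [← hPdef] at h3
    have h4 : (X : Polynomial ℂ).natDegree ≤ 1 := Polynomial.natDegree_X_le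
    omega
  set Q3 : Polynomial ℂ := P * P with hQ3def
  set C3 : ℝ := ∑ k ∈ Finset.range (Q3.natDegree + 1), ‖Q3.coeff k‖ with hC3def
  have hC3 : ∀ z, ‖F z‖ ^ 2 ≤ C3 * (1 + ‖z‖ ^ 2) ^ (m + 1) := by
    intro z
    have h1 : ‖Q3.eval z‖ = ‖F z‖ ^ 2 := by
      rw [hQ3def, eval_mul, hPF]; rw [norm_mul (F z) (F z), sq]
    rw [← h1]
    refine poly_eval_bound _ _ ?_ z
    have h2 : Q3.natDegree ≤ P.natDegree + P.natDegree := Polynomial.natDegree_mul_le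
    have h3 := Fpoly_natDegree m α
    rw [← hPdef] at h3
    omega
  -- the exhaustion function
  set a : ℝ := ((m / 2 : ℕ) : ℝ) + 1 with hadef
  have ha0 : 0 ≤ a := by positivity
  set h : ℂ → ℝ := fun z => a * Real.log (1 + ‖z‖ ^ 2) - (1/2) * Real.log (‖F z‖ ^ 2) with hhdef
  set CC : ℝ := 2 * a * C2 + C1 with hCCdef
  -- the gradient bound
  have hD : ∀ z ∈ U, ∃ L : ℂ →L[ℝ] ℝ, HasFDerivAt h L z ∧ ‖L‖ ≤ CC * lam z := by
    intro z hz
    have hFz : F z ≠ 0 := hFne z hz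
    have hnF : (0:ℝ) < ‖F z‖ := norm_pos_iff.mpr hFz
    have hs0 : (0:ℝ) < 1 + ‖z‖ ^ 2 := by positivity
    -- first term
    have hu : HasFDerivAt (fun w : ℂ => 1 + ‖w‖ ^ 2)
        (2 • (innerSL ℝ z).comp (ContinuousLinearMap.id ℝ ℂ)) z := by
      simpa using ((hasFDerivAt_id z).norm_sq).const_add (1:ℝ)
    set U1 : ℂ →L[ℝ] ℝ := 2 • (innerSL ℝ z).comp (ContinuousLinearMap.id ℝ ℂ) with hU1def
    have hU1norm : ‖U1‖ ≤ 2 * ‖z‖ := by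
      refine ContinuousLinearMap.opNorm_le_bound _ (by positivity) fun w => ?_
      have : U1 w = 2 * (inner ℝ z w : ℝ) := by
        simp [hU1def, two_smul]; ring
      rw [this]
      have := abs_real_inner_le_norm z w
      rw [Real.norm_eq_abs, abs_mul]
      calc |2| * |(inner ℝ z w : ℝ)| ≤ 2 * (‖z‖ * ‖w‖) := by
            rw [abs_two]
            exact mul_le_mul_of_nonneg_left this (by norm_num)
        _ = 2 * ‖z‖ * ‖w‖ := by ring
    have hlog1 : HasFDerivAt (fun w : ℂ => Real.log (1 + ‖w‖ ^ 2)) ((1 + ‖z‖ ^ 2)⁻¹ • U1) z := by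
      have := (Real.hasDerivAt_log (ne_of_gt hs0)).comp_hasFDerivAt z hu
      simpa only [Function.comp_def] using this
    -- second term
    have hFd : HasDerivAt F (P.derivative.eval z) z := by
      have h1 := P.hasDerivAt z
      have h2 : (fun x => P.eval x) = F := funext hPF
      rwa [h2] at h1
    set D : ℂ →L[ℝ] ℂ :=
      (ContinuousLinearMap.smulRight (1 : ℂ →L[ℂ] ℂ) (P.derivative.eval z)).restrictScalars ℝ
      with hDdef
    have hFf : HasFDerivAt F D z := (hFd.hasFDerivAt).restrictScalars ℝ
    have hv : HasFDerivAt (fun w => ‖F w‖ ^ 2) (2 • (innerSL ℝ (F z)).comp D) z := hFf.norm_sq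
    set V1 : ℂ →L[ℝ] ℝ := 2 • (innerSL ℝ (F z)).comp D with hV1def
    have hV1norm : ‖V1‖ ≤ 2 * ‖F z‖ * ‖P.derivative.eval z‖ := by
      refine ContinuousLinearMap.opNorm_le_bound _ (by positivity) fun w => ?_
      have hDw : D w = w * P.derivative.eval z := by
        simp [hDdef]
      have : V1 w = 2 * (inner ℝ (F z) (w * P.derivative.eval z) : ℝ) := by
        simp [hV1def, two_smul, hDw]; ring
      rw [this]
      have h5 := abs_real_inner_le_norm (F z) (w * P.derivative.eval z)
      rw [Real.norm_eq_abs, abs_mul, abs_two]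
      calc 2 * |(inner ℝ (F z) (w * P.derivative.eval z) : ℝ)|
          ≤ 2 * (‖F z‖ * ‖w * P.derivative.eval z‖) :=
            mul_le_mul_of_nonneg_left h5 (by norm_num)
        _ = 2 * ‖F z‖ * ‖P.derivative.eval z‖ * ‖w‖ := by rw [norm_mul w (P.derivative.eval z)]; ring
    have hFz2 : (‖F z‖ ^ 2 : ℝ) ≠ 0 := by positivity
    have hlog2 : HasFDerivAt (fun w : ℂ => Real.log (‖F w‖ ^ 2)) ((‖F z‖ ^ 2)⁻¹ • V1) z := by
      have := (Real.hasDerivAt_log hFz2).comp_hasFDerivAt z hv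
      simpa only [Function.comp_def] using this
    refine ⟨a • ((1 + ‖z‖ ^ 2)⁻¹ • U1) - (1/2 : ℝ) • ((‖F z‖ ^ 2)⁻¹ • V1),
      (hlog1.const_mul a).sub (hlog2.const_mul (1/2 : ℝ)), ?_⟩
    have hb1 : ‖a • ((1 + ‖z‖ ^ 2)⁻¹ • U1)‖ ≤ a * ((1 + ‖z‖ ^ 2)⁻¹ * (2 * ‖z‖)) := by
      rw [norm_smul a ((1 + ‖z‖ ^ 2)⁻¹ • U1), norm_smul ((1 + ‖z‖ ^ 2)⁻¹) U1,
        Real.norm_eq_abs, Real.norm_eq_abs, abs_of_nonneg ha0,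
        abs_of_nonneg (le_of_lt (inv_pos.mpr hs0))]
      exact mul_le_mul_of_nonneg_left
        (mul_le_mul_of_nonneg_left hU1norm (le_of_lt (inv_pos.mpr hs0))) ha0
    have hb2 : ‖(1/2 : ℝ) • ((‖F z‖ ^ 2)⁻¹ • V1)‖ ≤ ‖P.derivative.eval z‖ / ‖F z‖ := by
      rw [norm_smul (1/2 : ℝ) ((‖F z‖ ^ 2)⁻¹ • V1), norm_smul ((‖F z‖ ^ 2)⁻¹) V1,
        Real.norm_eq_abs, Real.norm_eq_abs]
      rw [abs_of_nonneg (by norm_num : (0:ℝ) ≤ 1/2), abs_of_nonneg (by positivity : (0:ℝ) ≤ (‖F z‖^2)⁻¹)]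
      calc (1/2) * ((‖F z‖ ^ 2)⁻¹ * ‖V1‖)
          ≤ (1/2) * ((‖F z‖ ^ 2)⁻¹ * (2 * ‖F z‖ * ‖P.derivative.eval z‖)) := by
            refine mul_le_mul_of_nonneg_left (mul_le_mul_of_nonneg_left hV1norm ?_) (by norm_num)
            positivity
        _ = ‖P.derivative.eval z‖ / ‖F z‖ := half_inv_sq_mul hnF
    calc ‖a • ((1 + ‖z‖ ^ 2)⁻¹ • U1) - (1/2 : ℝ) • ((‖F z‖ ^ 2)⁻¹ • V1)‖
        ≤ ‖a • ((1 + ‖z‖ ^ 2)⁻¹ • U1)‖ + ‖(1/2 : ℝ) • ((‖F z‖ ^ 2)⁻¹ • V1)‖ := norm_sub_le _ _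
      _ ≤ a * ((1 + ‖z‖ ^ 2)⁻¹ * (2 * ‖z‖)) + ‖P.derivative.eval z‖ / ‖F z‖ :=
          add_le_add hb1 hb2
      _ ≤ CC * lam z := by
          have e1 := hC1 z
          have e2 := hC2 z
          have hlamz : lam z = (1 + ‖z‖ ^ 2) ^ (m / 2) / ‖F z‖ := by
            rw [hlamdef]
            simp only [norm_inv]
            rw [div_eq_mul_inv]
          rw [hlamz, hCCdef]
          set s : ℝ := 1 + ‖z‖ ^ 2
          set A : ℝ := s ^ (m / 2) with hAdef
          have hA0 : 0 < A := by positivity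
          have e2' : ‖z‖ * ‖F z‖ ≤ C2 * (A * s) := by
            rw [hAdef, ← pow_succ]
            exact e2
          -- a * (s⁻¹ * (2‖z‖)) + d/‖F z‖ ≤ (2aC2 + C1) * (A / ‖F z‖)
          have key1 : a * (s⁻¹ * (2 * ‖z‖)) ≤ 2 * a * C2 * (A / ‖F z‖) := by
            have h6 : a * (s⁻¹ * (2 * ‖z‖)) = (2 * a * ‖z‖) / s :=
              a_inv_mul (ne_of_gt hs0)
            have h7 : 2 * a * C2 * (A / ‖F z‖) = (2 * a * C2 * A) / ‖F z‖ := by ring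
            rw [h6, h7, div_le_div_iff₀ hs0 hnF]
            nlinarith [mul_le_mul_of_nonneg_left e2' (by positivity : (0:ℝ) ≤ 2 * a),
              norm_nonneg z, hnF.le]
          have key2 : ‖P.derivative.eval z‖ / ‖F z‖ ≤ C1 * (A / ‖F z‖) := by
            rw [show C1 * (A / ‖F z‖) = (C1 * A) / ‖F z‖ by ring]
            gcongr
          calc a * (s⁻¹ * (2 * ‖z‖)) + ‖P.derivative.eval z‖ / ‖F z‖
              ≤ 2 * a * C2 * (A / ‖F z‖) + C1 * (A / ‖F z‖) := add_le_add key1 key2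
            _ = (2 * a * C2 + C1) * (A / ‖F z‖) := by ring
  -- continuity facts
  have hFcont : Continuous F := by
    rw [hFdef]
    exact continuous_id.mul (continuous_finset_prod _ fun i _ =>
      ((continuous_id.sub continuous_const).mul
        ((continuous_const.mul continuous_id).sub continuous_const)))
  have hhcontAt : ∀ z ∈ U, ContinuousAt h z := by
    intro z hz
    obtain ⟨L, hL, _⟩ := hD z hz
    exact hL.differentiableAt.continuousAt
  have hC3pos : 0 < C3 := by
    have h1 := hC3 (c 0)
    have h2 : (0:ℝ) < ‖F (c 0)‖ ^ 2 :=
      pow_pos (norm_pos_iff.mpr (hFne (c 0) (hmem 0 le_rfl))) 2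
    have h3 : (0:ℝ) < (1 + ‖c 0‖ ^ 2) ^ (m + 1) := by positivity
    nlinarith
  have hcast : (2:ℝ) * ((m/2 : ℕ) : ℝ) = (m:ℝ) := by
    exact_mod_cast congrArg (Nat.cast : ℕ → ℝ) hm2'
  show (∫⁻ t in Set.Ici (0:ℝ), ENNReal.ofReal (lam (c t) * ‖deriv c t‖)) = ⊤
  clear_value U F P C1 Q2 C2 Q3 C3 a h CC lam
  -- sublevel sets of h are compact
  have hcompactK : ∀ M : ℝ, IsCompact {z | z ∈ U ∧ h z ≤ M} := by
    intro M
    apply Metric.isCompact_of_isClosed_isBounded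
    · apply IsSeqClosed.isClosed
      intro x l hxK hxl
      by_cases hlU : l ∈ U
      · refine ⟨hlU, ?_⟩
        have ht : Filter.Tendsto (fun n => h (x n)) Filter.atTop (nhds (h l)) :=
          (hhcontAt l hlU).tendsto.comp hxl
        exact le_of_tendsto ht (Filter.Eventually.of_forall fun n => (hxK n).2)
      · exfalso
        have hFl : F l = 0 := hF0 l hlU
        have ht0 : Filter.Tendsto (fun n => ‖F (x n)‖ ^ 2) Filter.atTop (nhds 0) := by
          have h1 : Filter.Tendsto (fun n => F (x n)) Filter.atTop (nhds 0) := by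
            have := (hFcont.tendsto l).comp hxl
            rwa [hFl] at this
          have h2 := (h1.norm).pow 2
          simpa using h2
        have hev : ∀ᶠ n in Filter.atTop, ‖F (x n)‖ ^ 2 < Real.exp (-(2*M)) :=
          ht0.eventually_lt_const (Real.exp_pos _)
        obtain ⟨n, hn⟩ := hev.exists
        have hxU := (hxK n).1
        have hposn : (0:ℝ) < ‖F (x n)‖ ^ 2 :=
          pow_pos (norm_pos_iff.mpr (hFne (x n) hxU)) 2
        have hlogn : Real.log (‖F (x n)‖ ^ 2) < -(2*M) := by
          have := Real.log_lt_log hposn hn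
          rwa [Real.log_exp] at this
        have hnn : 0 ≤ a * Real.log (1 + ‖x n‖ ^ 2) :=
          mul_nonneg ha0 (Real.log_nonneg (by nlinarith [sq_nonneg ‖x n‖]))
        have hMlt : M < h (x n) := by
          rw [hhdef]
          dsimp only
          linarith [hlogn, hnn]
        exact absurd (hxK n).2 (not_le.mpr hMlt)
    · rw [isBounded_iff_forall_norm_le]
      refine ⟨Real.sqrt (Real.exp (2*M + Real.log C3)), fun z hz => ?_⟩
      obtain ⟨hzU, hzM⟩ := hz
      have hs1 : (1:ℝ) ≤ 1 + ‖z‖ ^ 2 := by nlinarith [sq_nonneg ‖z‖]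
      have hs0 : (0:ℝ) < 1 + ‖z‖ ^ 2 := by linarith
      have hFpos : (0:ℝ) < ‖F z‖ ^ 2 := pow_pos (norm_pos_iff.mpr (hFne z hzU)) 2
      have hlog2 : Real.log (‖F z‖ ^ 2) ≤ Real.log C3 + ((m:ℝ)+1) * Real.log (1 + ‖z‖ ^ 2) := by
        have h1 := Real.log_le_log hFpos (hC3 z)
        rw [Real.log_mul (ne_of_gt hC3pos) (by positivity)] at h1
        have h2 : Real.log ((1 + ‖z‖ ^ 2) ^ (m+1)) = ((m:ℝ)+1) * Real.log (1 + ‖z‖ ^ 2) := by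
          rw [Real.log_pow]; push_cast; ring
        rw [h2] at h1
        exact h1
      have hM' : a * Real.log (1 + ‖z‖ ^ 2) - (1/2) * Real.log (‖F z‖ ^ 2) ≤ M := by
        have := hzM
        rwa [hhdef] at this
      have hL : Real.log (1 + ‖z‖ ^ 2) ≤ 2*M + Real.log C3 := by
        rw [hadef] at hM'
        have e : (m:ℝ) * Real.log (1 + ‖z‖ ^ 2)
            = (2 * ((m/2:ℕ):ℝ)) * Real.log (1 + ‖z‖ ^ 2) := by rw [hcast]
        linarith [hlog2, hM', e]
      have hsle : 1 + ‖z‖ ^ 2 ≤ Real.exp (2*M + Real.log C3) := by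
        rw [← Real.exp_log hs0]
        exact Real.exp_le_exp.mpr hL
      have hz2 : ‖z‖ ^ 2 ≤ Real.exp (2*M + Real.log C3) := by linarith
      calc ‖z‖ = Real.sqrt (‖z‖ ^ 2) := (Real.sqrt_sq (norm_nonneg z)).symm
        _ ≤ _ := Real.sqrt_le_sqrt hz2
  -- h tends to infinity along the divergent curve
  have hgrow : ∀ M : ℝ, ∃ T : ℝ, 0 ≤ T ∧ ∀ t, T ≤ t → M < h (c t) := by
    intro M
    obtain ⟨T, hT⟩ := hdiv {z | z ∈ U ∧ h z ≤ M} (fun z hz => hz.1) (hcompactK M)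
    refine ⟨max T 0, le_max_right _ _, fun t ht => ?_⟩
    have h1 : c t ∈ U := hmem t (le_trans (le_max_right _ _) ht)
    have h2 := hT t (le_trans (le_max_left _ _) ht)
    by_contra hle
    push_neg at hle
    exact h2 ⟨h1, hle⟩
  -- final argument
  by_contra hne
  have hItop : (∫⁻ t in Set.Ici (0:ℝ), ENNReal.ofReal (lam (c t) * ‖deriv c t‖)) ≠ ⊤ := hne
  set g : ℝ → ℝ := fun t => lam (c t) * ‖deriv c t‖ with hgdef
  have hg0 : ∀ t, 0 ≤ g t := by
    intro t
    have : 0 ≤ lam (c t) := by rw [hlamdef]; positivity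
    exact mul_nonneg this (norm_nonneg _)
  set B : ℝ := (∫⁻ t in Set.Ici (0:ℝ), ENNReal.ofReal (g t)).toReal with hBdef
  have hlamc : ContinuousOn (fun t => lam (c t)) (Set.Ici 0) := by
    intro t ht
    have hUt : c t ∈ U := hmem t ht
    have hcontlam : ContinuousAt lam (c t) := by
      rw [hlamdef]
      have h1 : ContinuousAt F (c t) := hFcont.continuousAt
      have h2 : F (c t) ≠ 0 := hFne _ hUt
      exact (((continuous_const.add ((continuous_norm).pow 2)).pow _).continuousAt).mul
        ((h1.inv₀ h2).norm)
    exact hcontlam.comp_continuousWithinAt (hcont t ht)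
  have haem : ∀ S : ℝ, 0 ≤ S → AEStronglyMeasurable g (MeasureTheory.volume.restrict (Set.Ioc 0 S)) := by
    intro S hS
    have h1 : AEMeasurable (fun t => lam (c t)) (MeasureTheory.volume.restrict (Set.Ioc 0 S)) :=
      (hlamc.mono (Set.Ioc_subset_Icc_self.trans Set.Icc_subset_Ici_self)).aemeasurable
        measurableSet_Ioc
    have h3 : Measurable fun t => ‖deriv c t‖ := (measurable_deriv c).norm
    exact (h1.mul h3.aemeasurable).aestronglyMeasurable
  have hmeas : ∀ S : ℝ, 0 ≤ S → IntervalIntegrable g MeasureTheory.volume 0 S := by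
    intro S hS
    rw [intervalIntegrable_iff, Set.uIoc_of_le hS]
    constructor
    · exact haem S hS
    · rw [MeasureTheory.hasFiniteIntegral_iff_ofReal (Filter.Eventually.of_forall hg0)]
      refine lt_of_le_of_lt (MeasureTheory.lintegral_mono_set fun t ht => ht.1.le) ?_
      exact lt_top_iff_ne_top.mpr hItop
  set φ : ℝ → ℝ := fun t => h (c t) with hφdef
  have hφd : ∀ t, 0 ≤ t → HasDerivAt φ (deriv φ t) t ∧ |deriv φ t| ≤ CC * g t := by
    intro t ht
    obtain ⟨L, hL, hLb⟩ := hD (c t) (hmem t ht)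
    have hcd : HasDerivAt c (deriv c t) t := (hdiff t ht).hasDerivAt
    have h1 : HasDerivAt φ (L (deriv c t)) t := by
      have := hL.comp_hasDerivAt t hcd
      simpa [Function.comp_def] using this
    have h2 : deriv φ t = L (deriv c t) := h1.deriv
    constructor
    · rw [h2]; exact h1
    · rw [h2]
      have h3 : |L (deriv c t)| ≤ ‖L‖ * ‖deriv c t‖ := L.le_opNorm _
      have h4 : ‖L‖ * ‖deriv c t‖ ≤ (CC * lam (c t)) * ‖deriv c t‖ :=
        mul_le_mul_of_nonneg_right hLb (norm_nonneg _)
      calc |L (deriv c t)| ≤ ‖L‖ * ‖deriv c t‖ := h3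
        _ ≤ (CC * lam (c t)) * ‖deriv c t‖ := h4
        _ = CC * g t := by rw [hgdef]; ring
  have hCC0 : 0 ≤ CC := by
    have hc1 : 0 ≤ C1 := by
      rw [hC1def]; exact Finset.sum_nonneg fun k _ => norm_nonneg _
    have hc2 : 0 ≤ C2 := by
      rw [hC2def]; exact Finset.sum_nonneg fun k _ => norm_nonneg _
    rw [hCCdef]
    have h5 : 0 ≤ 2 * a * C2 := mul_nonneg (mul_nonneg (by norm_num) ha0) hc2
    linarith
  have hbound : ∀ S, 0 ≤ S → φ S ≤ φ 0 + CC * B := by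
    intro S hS
    have hint_g : IntervalIntegrable g MeasureTheory.volume 0 S := hmeas S hS
    have hint_CCg : IntervalIntegrable (fun t => CC * g t) MeasureTheory.volume 0 S := by
      simpa [mul_comm] using hint_g.const_mul CC
    have hψint : IntervalIntegrable (deriv φ) MeasureTheory.volume 0 S := by
      rw [intervalIntegrable_iff, Set.uIoc_of_le hS]
      refine MeasureTheory.Integrable.mono' (g := fun t => CC * g t) ?_ ?_ ?_
      · have := hint_CCg
        rw [intervalIntegrable_iff, Set.uIoc_of_le hS] at this
        exact this
      · exact (measurable_deriv φ).aestronglyMeasurable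
      · refine (MeasureTheory.ae_restrict_iff' measurableSet_Ioc).mpr
          (Filter.Eventually.of_forall fun t ht => ?_)
        rw [Real.norm_eq_abs]
        exact (hφd t ht.1.le).2
    have hFTC : φ S - φ 0 = ∫ t in (0:ℝ)..S, deriv φ t := by
      refine (intervalIntegral.integral_eq_sub_of_hasDerivAt ?_ hψint).symm
      intro t ht
      rw [Set.uIcc_of_le hS] at ht
      exact (hφd t ht.1).1
    have hmono : (∫ t in (0:ℝ)..S, deriv φ t) ≤ ∫ t in (0:ℝ)..S, CC * g t := by
      refine intervalIntegral.integral_mono_on hS hψint hint_CCg fun t ht => ?_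
      exact le_trans (le_abs_self _) (hφd t ht.1).2
    have hgB : (∫ t in (0:ℝ)..S, g t) ≤ B := by
      rw [intervalIntegral.integral_of_le hS]
      rw [MeasureTheory.integral_eq_lintegral_of_nonneg_ae
        (Filter.Eventually.of_forall hg0) (haem S hS)]
      rw [hBdef]
      refine ENNReal.toReal_mono hItop ?_
      exact MeasureTheory.lintegral_mono_set fun t ht => ht.1.le
    have hconst : (∫ t in (0:ℝ)..S, CC * g t) = CC * ∫ t in (0:ℝ)..S, g t :=
      intervalIntegral.integral_const_mul CC g
    have : φ S - φ 0 ≤ CC * B := by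
      rw [hFTC]
      calc (∫ t in (0:ℝ)..S, deriv φ t) ≤ ∫ t in (0:ℝ)..S, CC * g t := hmono
        _ = CC * ∫ t in (0:ℝ)..S, g t := hconst
        _ ≤ CC * B := mul_le_mul_of_nonneg_left hgB hCC0
    linarith [this]
  obtain ⟨T, hT0, hT⟩ := hgrow (φ 0 + CC * B)
  exact absurd (hbound T hT0) (not_le.mpr (hT T le_rfl))

end helpers

/-- the metric `ds² = (1+|g|²)^m |ω|²` of Example 1, with `g(z) = z` and
`ω = dz/(z ∏ (z − αᵢ)(αᵢ z − 1))` on `ℂ ∖ ({0} ∪ {αᵢ} ∪ {1/αᵢ})`, is complete. -/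
theorem example_metric_complete
    (m : ℕ) (hm : Even m) (hm2 : 2 ≤ m)
    (α : Fin (m / 2) → ℂ) (hinj : Function.Injective α)
    (h0 : ∀ i, α i ≠ 0 ∧ α i ≠ 1 ∧ α i ≠ -1)
    (hinv : ∀ i j, α i ≠ (α j)⁻¹) :
    IsCompleteConformalMetric
      {z : ℂ | z ≠ 0 ∧ ∀ i, z ≠ α i ∧ z ≠ (α i)⁻¹}
      (fun z => (1 + ‖z‖ ^ 2) ^ (m / 2) *
        ‖(z * ∏ i, ((z - α i) * (α i * z - 1)))⁻¹‖) := by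
  intro c hdc hdiff
  exact example_metric_complete' m hm hm2 α h0 c hdc hdiff
end

section
/- On ℂ there exists no conformal pseudo-metric du² = μ²|dz|² with μ continuous, positive on a nonempty open set, and with Gaussian curvature bounded above by a negative constant on {μ > 0}; in particular a metric with strictly negative curvature bounded away from 0 cannot exist on all of ℂ. -/
open Filter Topology

/-- The Laplacian `Δf = ∂²f/∂x² + ∂²f/∂y²` of a function `f : ℂ → ℝ`. -/
noncomputable def laplacian (f : ℂ → ℝ) (z : ℂ) : ℝ :=
  fderiv ℝ (fun w => fderiv ℝ f w 1) z 1 +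
    fderiv ℝ (fun w => fderiv ℝ f w Complex.I) z Complex.I

/-- Second derivative test: at an interior local max, the second derivative is `≤ 0`. -/
lemma secondDeriv_nonpos_of_isLocalMax {g : ℝ → ℝ}
    (hg : ∀ᶠ t in 𝓝 (0:ℝ), DifferentiableAt ℝ g t)
    (hg' : DifferentiableAt ℝ (deriv g) 0) (hmax : IsLocalMax g 0) :
    deriv (deriv g) 0 ≤ 0 := by
  by_contra h
  push_neg at h
  have h0 : deriv g 0 = 0 := hmax.deriv_eq_zero
  have hslope : Tendsto (slope (deriv g) 0) (𝓝[≠] 0) (𝓝 (deriv (deriv g) 0)) :=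
    hasDerivAt_iff_tendsto_slope.mp hg'.hasDerivAt
  have hpos : ∀ᶠ t in 𝓝[≠] (0:ℝ), 0 < slope (deriv g) 0 t :=
    hslope.eventually (eventually_gt_nhds h)
  have hpos' : ∀ᶠ t in 𝓝 (0:ℝ), t ≠ 0 → 0 < slope (deriv g) 0 t :=
    eventually_nhdsWithin_iff.mp hpos
  obtain ⟨δ, hδ, hball⟩ := Metric.eventually_nhds_iff.mp (hg.and (hpos'.and hmax))
  set ε := δ / 2 with hε
  have hεpos : 0 < ε := by positivity
  have hmem : ∀ t ∈ Set.Icc (0:ℝ) ε, dist t (0:ℝ) < δ := by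
    intro t ht
    rw [Real.dist_eq, sub_zero, abs_of_nonneg ht.1]
    have := ht.2
    simp only [hε] at this ⊢
    linarith
  have hcont : ContinuousOn g (Set.Icc 0 ε) := fun t ht =>
    ((hball (hmem t ht)).1.continuousAt).continuousWithinAt
  have hderivpos : ∀ t ∈ interior (Set.Icc (0:ℝ) ε), 0 < deriv g t := by
    intro t ht
    rw [interior_Icc] at ht
    have ht0 : (0:ℝ) < t := ht.1
    have hd := (hball (hmem t ⟨le_of_lt ht0, le_of_lt ht.2⟩)).2.1 (ne_of_gt ht0)
    rw [slope_def_field, h0, sub_zero, sub_zero, div_pos_iff] at hd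
    rcases hd with ⟨h1, _⟩ | ⟨_, h2⟩
    · exact h1
    · linarith
  have hmono := strictMonoOn_of_deriv_pos (convex_Icc (0:ℝ) ε) hcont hderivpos
  have hlt : g 0 < g ε := hmono (Set.left_mem_Icc.mpr hεpos.le)
    (Set.right_mem_Icc.mpr hεpos.le) hεpos
  have hle : g ε ≤ g 0 := (hball (hmem ε (Set.right_mem_Icc.mpr hεpos.le))).2.2
  linarith

/-- The second-order term of the Laplacian in direction `v` equals the second derivative
of the restriction to the line `t ↦ z + t • v`, for a `C²` function on an open set. -/
lemma line_deriv_stuff {g : ℂ → ℝ} {s : Set ℂ} (hs : IsOpen s) {z : ℂ} (hz : z ∈ s)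
    (hg : ContDiffOn ℝ 2 g s) (v : ℂ) :
    fderiv ℝ (fun w => fderiv ℝ g w v) z v = deriv (deriv (fun t : ℝ => g (z + t • v))) 0 ∧
    (∀ᶠ t in 𝓝 (0:ℝ), DifferentiableAt ℝ (fun t : ℝ => g (z + t • v)) t) ∧
    DifferentiableAt ℝ (deriv (fun t : ℝ => g (z + t • v))) 0 := by
  set L : ℝ → ℂ := fun t => z + t • v with hL
  have hLd : ∀ t : ℝ, HasDerivAt L v t := by
    intro t
    exact (((hasDerivAt_id t).smul_const v).const_add z).congr_deriv (by simp)
  have hLc : Continuous L := by continuity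
  have hL0 : L 0 = z := by simp [hL]
  have hgd : ∀ w ∈ s, DifferentiableAt ℝ g w := fun w hw =>
    (hg.differentiableOn (by norm_num)).differentiableAt (hs.mem_nhds hw)
  have hfd : ContDiffOn ℝ 1 (fun w => fderiv ℝ g w) s := hg.fderiv_of_isOpen hs (by norm_num)
  have hpd : DifferentiableAt ℝ (fun w => fderiv ℝ g w) z :=
    (hfd.differentiableOn (by norm_num)).differentiableAt (hs.mem_nhds hz)
  set p : ℂ → ℝ := fun w => fderiv ℝ g w v with hp
  have hpd' : DifferentiableAt ℝ p z :=
    ((ContinuousLinearMap.apply ℝ ℝ v).differentiableAt).comp z hpd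
  have hev : ∀ᶠ t in 𝓝 (0:ℝ), L t ∈ s := by
    have : Tendsto L (𝓝 0) (𝓝 z) := hL0 ▸ hLc.continuousAt
    exact this.eventually (hs.eventually_mem hz)
  have hline_diff : ∀ᶠ t in 𝓝 (0:ℝ), DifferentiableAt ℝ (fun t : ℝ => g (L t)) t := by
    filter_upwards [hev] with t ht
    exact ((hgd _ ht).hasFDerivAt.comp_hasDerivAt t (hLd t)).differentiableAt
  have hderiv_eq : deriv (fun t : ℝ => g (L t)) =ᶠ[𝓝 (0:ℝ)] fun t => p (L t) := by
    filter_upwards [hev] with t ht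
    exact ((hgd _ ht).hasFDerivAt.comp_hasDerivAt t (hLd t)).deriv
  have hpL : HasDerivAt (fun t => p (L t)) (fderiv ℝ p z v) 0 := by
    have h' : HasFDerivAt p (fderiv ℝ p z) (L 0) := hL0 ▸ hpd'.hasFDerivAt
    exact h'.comp_hasDerivAt 0 (hLd 0)
  refine ⟨?_, hline_diff, ?_⟩
  · rw [hderiv_eq.deriv_eq, hpL.deriv]
  · exact hderiv_eq.differentiableAt_iff.mpr hpL.differentiableAt

/-- Second derivative at `0` of `t ↦ log (R² − ((A+t)² + B²))`. -/
lemma dd_log_quadratic (A B R : ℝ) (hF : 0 < R ^ 2 - (A ^ 2 + B ^ 2)) :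
    deriv (deriv (fun t : ℝ => Real.log (R ^ 2 - ((A + t) ^ 2 + B ^ 2)))) 0
      = (-2 * (R ^ 2 - (A ^ 2 + B ^ 2)) - 4 * A ^ 2) / (R ^ 2 - (A ^ 2 + B ^ 2)) ^ 2 := by
  set F : ℝ → ℝ := fun t => R ^ 2 - ((A + t) ^ 2 + B ^ 2) with hFdef
  have hFd : ∀ t : ℝ, HasDerivAt F (-2 * (A + t)) t := by
    intro t
    have h1 : HasDerivAt (fun t : ℝ => A + t) 1 t := (hasDerivAt_id t).const_add A
    have h2 : HasDerivAt (fun t : ℝ => (A + t) ^ 2 + B ^ 2) (2 * (A + t) ^ 1 * 1) t :=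
      (h1.pow 2).add_const (B ^ 2)
    have := h2.const_sub (R ^ 2)
    exact this.congr_deriv (by ring)
  have hF0 : 0 < F 0 := by simp only [hFdef]; nlinarith
  have hFc : Continuous F := by fun_prop
  have hev : ∀ᶠ t in 𝓝 (0:ℝ), 0 < F t :=
    (hFc.continuousAt (x := 0)).eventually (eventually_gt_nhds hF0)
  have hderiv_eq : deriv (fun t => Real.log (F t)) =ᶠ[𝓝 (0:ℝ)]
      fun t => (-2 * (A + t)) / F t := by
    filter_upwards [hev] with t ht
    exact ((hFd t).log (ne_of_gt ht)).deriv
  rw [hderiv_eq.deriv_eq]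
  have hnum : HasDerivAt (fun t : ℝ => -2 * (A + t)) (-2) 0 := by
    simpa using ((hasDerivAt_id (0:ℝ)).const_add A).const_mul (-2 : ℝ)
  have hq : HasDerivAt (fun t => (-2 * (A + t)) / F t)
      (((-2) * F 0 - (-2 * (A + 0)) * (-2 * (A + 0))) / F 0 ^ 2) 0 :=
    hnum.div (hFd 0) (ne_of_gt hF0)
  rw [hq.deriv]
  have : F 0 = R ^ 2 - (A ^ 2 + B ^ 2) := by simp [hFdef]
  rw [this]
  ring

set_option maxHeartbeats 1000000 in
/-- there is no conformal pseudo-metric `du² = μ²|dz|²` on all of `ℂ` with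
`μ` continuous and nonnegative, positive on some nonempty open set, smooth where positive,
whose Gaussian curvature `−(Δ log μ)/μ²` is bounded above by a negative constant on
`{μ > 0}`. -/
theorem no_pseudo_metric_with_strictly_negative_curvature (c : ℝ) (hc : 0 < c) :
    ¬ ∃ μ : ℂ → ℝ, Continuous μ ∧ (∀ z, 0 ≤ μ z) ∧
      (∃ V : Set ℂ, IsOpen V ∧ V.Nonempty ∧ ∀ z ∈ V, 0 < μ z) ∧
      ContDiffOn ℝ 2 (fun z => Real.log (μ z)) {z : ℂ | 0 < μ z} ∧
      (∀ z, 0 < μ z →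
        -(laplacian (fun w => Real.log (μ w)) z) / (μ z) ^ 2 ≤ -c) := by
  rintro ⟨μ, hμc, hμ0, ⟨V, hVopen, ⟨z₀, hz₀⟩, hVpos⟩, hlog, hcurv⟩
  have hμz₀ : 0 < μ z₀ := hVpos z₀ hz₀
  have hΩ : IsOpen {z : ℂ | 0 < μ z} := isOpen_lt continuous_const hμc
  have hsc : 0 < Real.sqrt c := Real.sqrt_pos.mpr hc
  set R : ℝ := 3 / (Real.sqrt c * μ z₀) with hR
  have hRpos : 0 < R := by positivity
  have hRval : Real.sqrt c * μ z₀ * R = 3 := by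
    rw [hR]
    field_simp
  clear_value R
  set F : ℂ → ℝ := fun z => R ^ 2 - Complex.normSq (z - z₀) with hF
  have hFc : Continuous F := by
    rw [hF]
    exact continuous_const.sub (Complex.continuous_normSq.comp (continuous_id.sub continuous_const))
  clear_value F
  -- maximum of φ = μ·F on the closed ball
  obtain ⟨z₁, hz₁K, hmax⟩ := (isCompact_closedBall z₀ R).exists_isMaxOn
    (Metric.nonempty_closedBall.mpr hRpos.le)
    ((hμc.mul hFc).continuousOn)
  have hFz₀ : F z₀ = R ^ 2 := by simp [hF]
  have hφz₀ : 0 < μ z₀ * F z₀ := by rw [hFz₀]; positivity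
  have hφz₁ : 0 < μ z₁ * F z₁ :=
    lt_of_lt_of_le hφz₀ (hmax (Metric.mem_closedBall_self hRpos.le))
  have hμz₁ : 0 < μ z₁ := by
    rcases (hμ0 z₁).lt_or_eq with h | h
    · exact h
    · rw [← h] at hφz₁; simp at hφz₁
  have hFz₁ : 0 < F z₁ := by
    by_contra h
    push_neg at h
    nlinarith
  have hFball : ∀ z ∈ Metric.ball z₀ R, 0 < F z := by
    intro z hz
    rw [Metric.mem_ball, dist_eq_norm] at hz
    have h2 : ‖z - z₀‖ ^ 2 = Complex.normSq (z - z₀) := by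
      rw [Complex.sq_norm]
    simp only [hF]
    nlinarith [norm_nonneg (z - z₀)]
  have hz₁ball : z₁ ∈ Metric.ball z₀ R := by
    rw [Metric.mem_ball, dist_eq_norm]
    have h1 : Complex.normSq (z₁ - z₀) < R ^ 2 := by
      simp only [hF] at hFz₁; linarith
    have h2 : ‖z₁ - z₀‖ ^ 2 = Complex.normSq (z₁ - z₀) := by
      rw [Complex.sq_norm]
    nlinarith [norm_nonneg (z₁ - z₀)]
  set s : Set ℂ := {z : ℂ | 0 < μ z} ∩ Metric.ball z₀ R with hs
  clear_value s
  have hsopen : IsOpen s := by rw [hs]; exact hΩ.inter Metric.isOpen_ball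
  have hz₁s : z₁ ∈ s := by rw [hs]; exact ⟨hμz₁, hz₁ball⟩
  have hssub : s ⊆ {z : ℂ | 0 < μ z} := by rw [hs]; exact Set.inter_subset_left
  have hsball : s ⊆ Metric.ball z₀ R := by rw [hs]; exact Set.inter_subset_right
  set u : ℂ → ℝ := fun z => Real.log (μ z) with hu
  set q : ℂ → ℝ := fun z => Real.log (F z) with hq
  clear_value u q
  have huC2 : ContDiffOn ℝ 2 u s := hlog.mono hssub
  have hFsmooth : ContDiff ℝ 2 F := by
    have hFeq : F = fun z : ℂ =>
        R ^ 2 - ((Complex.reCLM z - z₀.re) ^ 2 + (Complex.imCLM z - z₀.im) ^ 2) := by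
      funext z
      simp only [hF, Complex.normSq_apply, Complex.sub_re, Complex.sub_im,
        Complex.reCLM_apply, Complex.imCLM_apply]
      ring
    rw [hFeq]
    exact contDiff_const.sub
      (((Complex.reCLM.contDiff.sub contDiff_const).pow 2).add
        ((Complex.imCLM.contDiff.sub contDiff_const).pow 2))
  have hqC2 : ContDiffOn ℝ 2 q s := by
    rw [hq]
    exact hFsmooth.contDiffOn.log fun z hz => ne_of_gt (hFball z (hsball hz))
  -- local max of u + q at z₁
  have hlocmax : IsLocalMax (fun z => u z + q z) z₁ := by
    filter_upwards [hsopen.eventually_mem hz₁s] with z hzs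
    have hμz : 0 < μ z := hssub hzs
    have hFz : 0 < F z := hFball z (hsball hzs)
    have h1 : u z + q z = Real.log (μ z * F z) := by
      simp only [hu, hq]
      exact (Real.log_mul (ne_of_gt hμz) (ne_of_gt hFz)).symm
    have h2 : u z₁ + q z₁ = Real.log (μ z₁ * F z₁) := by
      simp only [hu, hq]
      exact (Real.log_mul (ne_of_gt hμz₁) (ne_of_gt hFz₁)).symm
    rw [h1, h2]
    exact Real.log_le_log (mul_pos hμz hFz) (hmax (Metric.ball_subset_closedBall (hsball hzs)))
  -- per-direction second-derivative inequality
  have key : ∀ v : ℂ,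
      fderiv ℝ (fun w => fderiv ℝ u w v) z₁ v + fderiv ℝ (fun w => fderiv ℝ q w v) z₁ v ≤ 0 := by
    intro v
    obtain ⟨hequ, hdu, hdu'⟩ := line_deriv_stuff hsopen hz₁s huC2 v
    obtain ⟨heqq, hdq, hdq'⟩ := line_deriv_stuff hsopen hz₁s hqC2 v
    set gs : ℝ → ℝ := fun t => u (z₁ + t • v) + q (z₁ + t • v) with hgs
    have hsum_ev : ∀ᶠ t in 𝓝 (0:ℝ), DifferentiableAt ℝ gs t := by
      filter_upwards [hdu, hdq] with t h1 h2
      exact h1.add h2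
    have hderiv_sum : deriv gs =ᶠ[𝓝 (0:ℝ)]
        fun t => deriv (fun t : ℝ => u (z₁ + t • v)) t + deriv (fun t : ℝ => q (z₁ + t • v)) t := by
      filter_upwards [hdu, hdq] with t h1 h2
      exact deriv_add h1 h2
    have hd2sum : DifferentiableAt ℝ (deriv gs) 0 :=
      hderiv_sum.differentiableAt_iff.mpr (hdu'.add hdq')
    have hgmax : IsLocalMax gs 0 := by
      have hLc : ContinuousAt (fun t : ℝ => z₁ + t • v) 0 := by fun_prop
      have hL0 : (fun t : ℝ => z₁ + t • v) 0 = z₁ := by simp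
      have hT : Tendsto (fun t : ℝ => z₁ + t • v) (𝓝 0) (𝓝 z₁) := by
        simpa using hLc.tendsto
      have h := hT.eventually hlocmax
      filter_upwards [h] with t ht
      simpa [hgs, hL0] using ht
    have h0 := secondDeriv_nonpos_of_isLocalMax hsum_ev hd2sum hgmax
    have hdd : deriv (deriv gs) 0 = deriv (deriv (fun t : ℝ => u (z₁ + t • v))) 0 +
        deriv (deriv (fun t : ℝ => q (z₁ + t • v))) 0 := by
      rw [hderiv_sum.deriv_eq]
      exact deriv_add hdu' hdq'
    rw [hdd, ← hequ, ← heqq] at h0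
    exact h0
  -- Laplacian of q at z₁
  set A : ℝ := (z₁ - z₀).re with hA
  set B : ℝ := (z₁ - z₀).im with hB
  clear_value A B
  have hFo : F z₁ = R ^ 2 - (A ^ 2 + B ^ 2) := by
    simp only [hF, Complex.normSq_apply, hA, hB]
    ring
  have hFopos : 0 < R ^ 2 - (A ^ 2 + B ^ 2) := hFo ▸ hFz₁
  set Fo : ℝ := R ^ 2 - (A ^ 2 + B ^ 2) with hFodef
  clear_value Fo
  have hline1 : (fun t : ℝ => q (z₁ + t • (1:ℂ))) =
      fun t : ℝ => Real.log (R ^ 2 - ((A + t) ^ 2 + B ^ 2)) := by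
    funext t
    simp only [hq, hF]
    congr 1
    simp only [Complex.normSq_apply, Complex.real_smul, mul_one, Complex.add_re, Complex.add_im,
      Complex.sub_re, Complex.sub_im, Complex.ofReal_re, Complex.ofReal_im, hA, hB]
    ring
  have hlineI : (fun t : ℝ => q (z₁ + t • Complex.I)) =
      fun t : ℝ => Real.log (R ^ 2 - ((B + t) ^ 2 + A ^ 2)) := by
    funext t
    simp only [hq, hF]
    congr 1
    simp only [Complex.normSq_apply, Complex.real_smul, Complex.add_re, Complex.add_im,
      Complex.sub_re, Complex.sub_im, Complex.ofReal_re, Complex.ofReal_im,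
      Complex.mul_re, Complex.mul_im, Complex.I_re, Complex.I_im, hA, hB]
    ring
  obtain ⟨heqq1, _, _⟩ := line_deriv_stuff hsopen hz₁s hqC2 1
  obtain ⟨heqqI, _, _⟩ := line_deriv_stuff hsopen hz₁s hqC2 Complex.I
  have hFopos' : 0 < R ^ 2 - (A ^ 2 + B ^ 2) := by rw [← hFodef]; exact hFopos
  have hlapq1 : fderiv ℝ (fun w => fderiv ℝ q w 1) z₁ 1 =
      (-2 * Fo - 4 * A ^ 2) / Fo ^ 2 := by
    rw [heqq1, hline1, hFodef]
    exact dd_log_quadratic A B R hFopos'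
  have hlapqI : fderiv ℝ (fun w => fderiv ℝ q w Complex.I) z₁ Complex.I =
      (-2 * Fo - 4 * B ^ 2) / Fo ^ 2 := by
    rw [heqqI, hlineI, hFodef]
    rw [dd_log_quadratic B A R (by nlinarith)]
    ring
  -- combine: laplacian u z₁ ≤ 4R²/Fo²
  have hlap_le : laplacian u z₁ ≤ 4 * R ^ 2 / Fo ^ 2 := by
    have h1 := key 1
    have hI := key Complex.I
    rw [hlapq1] at h1
    rw [hlapqI] at hI
    have hFo2 : 0 < Fo ^ 2 := by positivity
    have : laplacian u z₁ ≤ (2 * Fo + 4 * A ^ 2) / Fo ^ 2 + (2 * Fo + 4 * B ^ 2) / Fo ^ 2 := by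
      unfold laplacian
      have e1 : -((-2 * Fo - 4 * A ^ 2) / Fo ^ 2) = (2 * Fo + 4 * A ^ 2) / Fo ^ 2 := by ring
      have e2 : -((-2 * Fo - 4 * B ^ 2) / Fo ^ 2) = (2 * Fo + 4 * B ^ 2) / Fo ^ 2 := by ring
      linarith
    calc laplacian u z₁ ≤ (2 * Fo + 4 * A ^ 2) / Fo ^ 2 + (2 * Fo + 4 * B ^ 2) / Fo ^ 2 := this
      _ = 4 * R ^ 2 / Fo ^ 2 := by
          rw [← add_div]
          congr 1
          rw [hFodef]; ring
  -- curvature hypothesis gives lower bound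
  have hcurv₁ : c * μ z₁ ^ 2 ≤ laplacian u z₁ := by
    have h := hcurv z₁ hμz₁
    rw [div_le_iff₀ (by positivity)] at h
    linarith
  -- final contradiction
  have hμFo : c * μ z₁ ^ 2 * Fo ^ 2 ≤ 4 * R ^ 2 := by
    have hFo2 : 0 < Fo ^ 2 := by positivity
    have := hcurv₁.trans hlap_le
    rw [le_div_iff₀ hFo2] at this
    linarith
  have hφ₀ : μ z₀ * R ^ 2 ≤ μ z₁ * Fo := by
    have h : μ z₀ * F z₀ ≤ μ z₁ * F z₁ := hmax (Metric.mem_closedBall_self hRpos.le)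
    rw [hFz₀, hFo] at h
    exact h
  have hRsq : Real.sqrt c ^ 2 = c := Real.sq_sqrt hc.le
  have e1 : c * (μ z₀ * R ^ 2) ^ 2 ≤ c * (μ z₁ * Fo) ^ 2 :=
    mul_le_mul_of_nonneg_left (pow_le_pow_left₀ (by positivity) hφ₀ 2) hc.le
  have e2 : c * (μ z₁ * Fo) ^ 2 ≤ 4 * R ^ 2 := by nlinarith
  have e3 : c * (μ z₀ * R ^ 2) ^ 2 = 9 * R ^ 2 := by
    have h9 : (Real.sqrt c * μ z₀ * R) ^ 2 = 9 := by rw [hRval]; norm_num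
    have : c * (μ z₀ * R ^ 2) ^ 2 = (Real.sqrt c * μ z₀ * R) ^ 2 * R ^ 2 := by
      linear_combination (-(μ z₀ ^ 2 * R ^ 4)) * hRsq
    rw [this, h9]
  nlinarith [mul_pos hRpos hRpos]
end
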